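/- Let μ be a Borel probability measure on the Euclidean plane ℝ² with compact support, absolutely continuous with respect to Lebesgue measure, and such that the support of μ is not contained in any affine line. Let p̄ be the unique minimizer over ℝ² of f(p) = ∫ ‖p − q‖ dμ(q) (the generalized median of μ). Let (q_j)_{j ∈ ℕ} be i.i.d. random points with law μ, and for each n let p*_n be any global minimizer over ℝ² of p ↦ ∑_{j=1}^{n} ‖p − q_j‖. Then, almost surely, p*_n → p̄ as n → ∞. -/

import Mathlib

open MeasureTheory ProbabilityTheory Filter


local notation "E2" => EuclideanSpace ℝ (Fin 2)

lemma aux_det (f : E2 → ℝ) (hfl : ∀ p y : E2, f p ≤ f y + ‖p - y‖)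
    (pbar : E2) (hmin : ∀ y, f pbar ≤ f y) (huniq : ∀ p : E2, (∀ y, f p ≤ f y) → p = pbar)
    (x : ℕ → E2) (R : ℝ) (hR : 0 ≤ R) (hx : ∀ j, ‖x j‖ ≤ R)
    (s : Set E2) (hd : Dense s)
    (hconv : ∀ y ∈ s,
      Tendsto (fun n : ℕ => (∑ j ∈ Finset.range n, ‖y - x j‖) / n) atTop (nhds (f y)))
    (p : ℕ → E2)
    (hp : ∀ n (y : E2), (∑ j ∈ Finset.range n, ‖p n - x j‖) ≤ ∑ j ∈ Finset.range n, ‖y - x j‖) :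
    Tendsto p atTop (nhds pbar) := by
  set g : ℕ → E2 → ℝ := fun n y => (∑ j ∈ Finset.range n, ‖y - x j‖) / n with hgdef
  -- equi-Lipschitz property of the empirical averages
  have sumlip : ∀ (n : ℕ) (a b : E2), (∑ j ∈ Finset.range n, ‖a - x j‖)
      ≤ (∑ j ∈ Finset.range n, ‖b - x j‖) + n * ‖a - b‖ := by
    intro n a b
    have h : ∀ j, ‖a - x j‖ ≤ ‖b - x j‖ + ‖a - b‖ := by
      intro j
      calc ‖a - x j‖ = ‖(b - x j) + (a - b)‖ := by abel_nf
        _ ≤ ‖b - x j‖ + ‖a - b‖ := norm_add_le _ _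
    calc (∑ j ∈ Finset.range n, ‖a - x j‖)
        ≤ ∑ j ∈ Finset.range n, (‖b - x j‖ + ‖a - b‖) :=
          Finset.sum_le_sum fun j _ => h j
      _ = (∑ j ∈ Finset.range n, ‖b - x j‖) + n * ‖a - b‖ := by
          rw [Finset.sum_add_distrib, Finset.sum_const, Finset.card_range, nsmul_eq_mul]
  have glip : ∀ (n : ℕ) (a b : E2), g n a ≤ g n b + ‖a - b‖ := by
    intro n a b
    rcases Nat.eq_zero_or_pos n with h0 | hn
    · simp [hgdef, h0, norm_nonneg]
    have hn' : (0:ℝ) < n := by exact_mod_cast hn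
    calc g n a = (∑ j ∈ Finset.range n, ‖a - x j‖) / n := rfl
      _ ≤ ((∑ j ∈ Finset.range n, ‖b - x j‖) + n * ‖a - b‖) / n := by
          gcongr; exact sumlip n a b
      _ = g n b + ‖a - b‖ := by simp only [hgdef]; rw [add_div, mul_div_cancel_left₀ _ hn'.ne']
  have glip' : ∀ (n : ℕ) (a b : E2), |g n a - g n b| ≤ ‖a - b‖ := by
    intro n a b
    rw [abs_sub_le_iff]
    constructor
    · linarith [glip n a b]
    · have := glip n b a
      rw [norm_sub_rev] at this
      linarith
  have flip' : ∀ (a b : E2), |f a - f b| ≤ ‖a - b‖ := by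
    intro a b
    rw [abs_sub_le_iff]
    constructor
    · linarith [hfl a b]
    · have := hfl b a
      rw [norm_sub_rev] at this
      linarith
  have fcont : Continuous f := by
    refine (LipschitzWith.of_dist_le_mul (K := 1) fun a b => ?_).continuous
    rw [Real.dist_eq, NNReal.coe_one, one_mul, dist_eq_norm]
    exact flip' a b
  set M : ℝ := ‖pbar‖ + 2 * R with hM
  have hpbarM : ‖pbar‖ ≤ M := by simp [hM]; linarith
  -- the minimizers stay in the ball of radius M
  have hpK : ∀ n : ℕ, 1 ≤ n → ‖p n‖ ≤ M := by
    intro n hn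
    have h1 : (∑ j ∈ Finset.range n, ‖p n - x j‖) ≤ n * (‖pbar‖ + R) := by
      calc (∑ j ∈ Finset.range n, ‖p n - x j‖) ≤ ∑ j ∈ Finset.range n, ‖pbar - x j‖ :=
          hp n pbar
        _ ≤ ∑ j ∈ Finset.range n, (‖pbar‖ + R) := by
            refine Finset.sum_le_sum fun j _ => ?_
            calc ‖pbar - x j‖ ≤ ‖pbar‖ + ‖x j‖ := norm_sub_le _ _
              _ ≤ ‖pbar‖ + R := by linarith [hx j]
        _ = n * (‖pbar‖ + R) := by
            rw [Finset.sum_const, Finset.card_range, nsmul_eq_mul]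
    have h2 : (n : ℝ) * (‖p n‖ - R) ≤ ∑ j ∈ Finset.range n, ‖p n - x j‖ := by
      calc (n : ℝ) * (‖p n‖ - R) = ∑ _j ∈ Finset.range n, (‖p n‖ - R) := by
            rw [Finset.sum_const, Finset.card_range, nsmul_eq_mul]
        _ ≤ ∑ j ∈ Finset.range n, ‖p n - x j‖ := by
            refine Finset.sum_le_sum fun j _ => ?_
            have := norm_sub_norm_le (p n) (x j)
            have hxj := hx j
            linarith
    have hn' : (0:ℝ) < n := by exact_mod_cast hn
    have : (n : ℝ) * (‖p n‖ - R) ≤ n * (‖pbar‖ + R) := le_trans h2 h1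
    have := le_of_mul_le_mul_left (by linarith [this] : (n:ℝ) * (‖p n‖ - R) ≤ n * (‖pbar‖ + R)) hn'
    simp only [hM]
    linarith
  set K : Set E2 := Metric.closedBall 0 M with hK
  have hKc : IsCompact K := isCompact_closedBall 0 M
  -- uniform convergence of g n to f on K
  have unif : ∀ δ : ℝ, 0 < δ → ∃ N : ℕ, ∀ n ≥ N, ∀ z ∈ K, |g n z - f z| ≤ δ := by
    intro δ hδ
    have hcover : K ⊆ ⋃ y : s, Metric.ball (y : E2) (δ / 3) := by
      intro z _
      obtain ⟨y, hy, hyz⟩ := Metric.dense_iff.1 hd z (δ / 3) (by linarith)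
      exact Set.mem_iUnion.2 ⟨⟨y, hyz⟩, by rwa [Metric.mem_ball, dist_comm]⟩
    obtain ⟨t, ht⟩ := hKc.elim_finite_subcover (fun y : s => Metric.ball (y : E2) (δ / 3))
      (fun _ => Metric.isOpen_ball) hcover
    have hev : ∀ᶠ n in atTop, ∀ y ∈ t, |g n (y : E2) - f y| ≤ δ / 3 := by
      rw [eventually_all_finset]
      intro y _
      obtain ⟨N, hN⟩ := Metric.tendsto_atTop.1 (hconv (y : E2) y.2) (δ/3) (by linarith)
      rw [eventually_atTop]
      exact ⟨N, fun n hn => by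
        have := hN n hn
        rw [Real.dist_eq] at this
        exact this.le⟩
    obtain ⟨N, hN⟩ := eventually_atTop.1 hev
    refine ⟨N, fun n hn z hz => ?_⟩
    obtain ⟨y, hyt, hzy⟩ := Set.mem_iUnion₂.1 (ht hz)
    rw [Metric.mem_ball, dist_eq_norm] at hzy
    have h1 := glip' n z y
    have h2 := hN n hn y hyt
    have h3 := flip' (y : E2) z
    rw [norm_sub_rev] at h3
    calc |g n z - f z| = |(g n z - g n y) + (g n y - f y) + (f y - f z)| := by ring_nf
      _ ≤ |g n z - g n y| + |g n y - f y| + |f y - f z| := by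
          exact (abs_add_le _ _).trans (by gcongr; exact abs_add_le _ _)
      _ ≤ ‖z - y‖ + δ / 3 + ‖z - y‖ := by
          rw [abs_sub_comm (f y) (f z)] at h3 ⊢
          gcongr
      _ ≤ δ := by linarith
  -- final argument
  rw [Metric.tendsto_atTop]
  intro ε hε
  set S : Set E2 := K ∩ {z | ε ≤ dist z pbar} with hS
  have hScl : IsCompact S := hKc.inter_right (isClosed_le continuous_const (continuous_id.dist continuous_const))
  rcases Set.eq_empty_or_nonempty S with hSe | hSne
  · refine ⟨1, fun n hn => ?_⟩
    have hpn : p n ∈ K := by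
      rw [hK, Metric.mem_closedBall, dist_zero_right]
      exact hpK n hn
    by_contra h
    push_neg at h
    exact Set.eq_empty_iff_forall_notMem.1 hSe (p n) ⟨hpn, h⟩
  · obtain ⟨p0, hp0S, hp0min⟩ := hScl.exists_isMinOn hSne fcont.continuousOn
    have hm : f pbar < f p0 := by
      rcases lt_or_ge (f pbar) (f p0) with h | h
      · exact h
      · exfalso
        have hglobal : ∀ y, f p0 ≤ f y := fun y => le_trans h (hmin y)
        have := huniq p0 hglobal
        have hεd : ε ≤ dist p0 pbar := hp0S.2
        rw [this, dist_self] at hεd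
        linarith
    set δ : ℝ := (f p0 - f pbar) / 3 with hδdef
    have hδ : 0 < δ := by rw [hδdef]; linarith
    obtain ⟨N, hN⟩ := unif δ hδ
    refine ⟨max N 1, fun n hn => ?_⟩
    have hnN : n ≥ N := le_trans (le_max_left _ _) hn
    have hn1 : 1 ≤ n := le_trans (le_max_right _ _) hn
    have hpn : p n ∈ K := by
      rw [hK, Metric.mem_closedBall, dist_zero_right]
      exact hpK n hn1
    have hpbarK : pbar ∈ K := by
      rw [hK, Metric.mem_closedBall, dist_zero_right]; exact hpbarM
    by_contra h
    push_neg at h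
    have hpnS : p n ∈ S := ⟨hpn, h⟩
    have h1 : f p0 ≤ f (p n) := hp0min hpnS
    have h2 : |g n (p n) - f (p n)| ≤ δ := hN n hnN (p n) hpn
    have h3 : |g n pbar - f pbar| ≤ δ := hN n hnN pbar hpbarK
    have h4 : g n (p n) ≤ g n pbar := by
      rw [hgdef]
      have hn' : (0:ℝ) < n := by exact_mod_cast hn1
      exact (div_le_div_iff_of_pos_right hn').2 (hp n pbar)
    rw [abs_sub_le_iff] at h2 h3
    linarith [h2.1, h2.2, h3.1, h3.2]



/-- Let `μ` be a compactly supported Borel probability measure on the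
Euclidean plane, absolutely continuous w.r.t. Lebesgue measure, whose support is contained in
no affine line. Let `pbar` be the unique minimizer of `f(p) = ∫ ‖p - y‖ dμ(y)` (the
generalized median of `μ`). Let `(q j)` be i.i.d. with law `μ` and, for each `n`, let
`pFT n ω` be any global minimizer of `p ↦ ∑_{j<n} ‖p - q j ω‖` (a Fermat–Torricelli point of
the first `n` samples). Then, almost surely, `pFT n ω → pbar`. -/
theorem empirical_FT_points_tendsto_median
    (μ : Measure (EuclideanSpace ℝ (Fin 2))) [IsProbabilityMeasure μ]
    (Q : Set (EuclideanSpace ℝ (Fin 2))) (hQ : IsCompact Q) (hsupp : μ Qᶜ = 0)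
    (hac : μ ≪ volume)
    (hline : ∀ a d : EuclideanSpace ℝ (Fin 2), d ≠ 0 →
      μ {x : EuclideanSpace ℝ (Fin 2) | ¬ ∃ t : ℝ, x = a + t • d} ≠ 0)
    (pbar : EuclideanSpace ℝ (Fin 2))
    (hpbar : ∀ y : EuclideanSpace ℝ (Fin 2), (∫ z, ‖pbar - z‖ ∂μ) ≤ ∫ z, ‖y - z‖ ∂μ)
    (hpbaruniq : ∀ p : EuclideanSpace ℝ (Fin 2),
      (∀ y : EuclideanSpace ℝ (Fin 2), (∫ z, ‖p - z‖ ∂μ) ≤ ∫ z, ‖y - z‖ ∂μ) → p = pbar)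
    (Ω : Type*) [MeasureSpace Ω] [IsProbabilityMeasure (ℙ : Measure Ω)]
    (q : ℕ → Ω → EuclideanSpace ℝ (Fin 2)) (hmeas : ∀ j, Measurable (q j))
    (hlaw : ∀ j, Measure.map (q j) ℙ = μ)
    (hindep : iIndepFun q ℙ)
    (pFT : ℕ → Ω → EuclideanSpace ℝ (Fin 2))
    (hFT : ∀ n ω, ∀ y : EuclideanSpace ℝ (Fin 2),
      (∑ j ∈ Finset.range n, ‖pFT n ω - q j ω‖) ≤ ∑ j ∈ Finset.range n, ‖y - q j ω‖) :
    ∀ᵐ ω : Ω, Tendsto (fun n => pFT n ω) atTop (nhds pbar) := by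
  -- a radius bounding `Q`
  obtain ⟨R₀, hR₀⟩ := hQ.isBounded.subset_closedBall 0
  set R : ℝ := max R₀ 0 with hRdef
  have hR : 0 ≤ R := le_max_right _ _
  have hQR : Q ⊆ Metric.closedBall 0 R :=
    hR₀.trans (Metric.closedBall_subset_closedBall (le_max_left _ _))
  -- the objective function
  set f : E2 → ℝ := fun p => ∫ z, ‖p - z‖ ∂μ with hfdef
  have haeQ : ∀ᵐ z ∂μ, z ∈ Q := by
    rw [ae_iff]
    convert hsupp using 2
    rfl
  have hgm : ∀ y : E2, Measurable fun z : E2 => ‖y - z‖ := fun y =>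
    (continuous_const.sub continuous_id).norm.measurable
  have hint : ∀ y : E2, Integrable (fun z => ‖y - z‖) μ := by
    intro y
    refine Integrable.mono' (integrable_const (‖y‖ + R)) (hgm y).aestronglyMeasurable ?_
    filter_upwards [haeQ] with z hz
    have hzR : ‖z‖ ≤ R := by
      have := hQR hz
      rwa [Metric.mem_closedBall, dist_zero_right] at this
    calc ‖(‖y - z‖)‖ = ‖y - z‖ := by rw [norm_norm]
      _ ≤ ‖y‖ + ‖z‖ := norm_sub_le _ _
      _ ≤ ‖y‖ + R := by linarith
  -- Lipschitz property of f
  have hfl : ∀ p y : E2, f p ≤ f y + ‖p - y‖ := by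
    intro p y
    have h1 : ∀ z : E2, ‖p - z‖ ≤ ‖y - z‖ + ‖p - y‖ := by
      intro z
      calc ‖p - z‖ = ‖(y - z) + (p - y)‖ := by abel_nf
        _ ≤ ‖y - z‖ + ‖p - y‖ := norm_add_le _ _
    calc f p ≤ ∫ z, (‖y - z‖ + ‖p - y‖) ∂μ :=
        integral_mono (hint p) ((hint y).add (integrable_const _)) h1
      _ = f y + ‖p - y‖ := by
        rw [integral_add (hint y) (integrable_const _), integral_const, measureReal_def, measure_univ,
          ENNReal.toReal_one, one_smul]
  -- a countable dense set
  obtain ⟨s, hsc, hsd⟩ := TopologicalSpace.exists_countable_dense E2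
  -- strong law of large numbers for each fixed y
  have slln : ∀ y : E2, ∀ᵐ ω : Ω,
      Tendsto (fun n : ℕ => (∑ j ∈ Finset.range n, ‖y - q j ω‖) / n) atTop (nhds (f y)) := by
    intro y
    set X : ℕ → Ω → ℝ := fun j ω => ‖y - q j ω‖ with hXdef
    have hXm : ∀ j, Measurable (X j) := fun j => (hgm y).comp (hmeas j)
    have hint0 : Integrable (X 0) ℙ := by
      have h := hint y
      rw [← hlaw 0] at h
      exact (integrable_map_measure (hgm y).aestronglyMeasurable (hmeas 0).aemeasurable).1 h
    have hpair : Pairwise (Function.onFun (IndepFun · · ℙ) X) := by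
      intro i j hij
      exact (hindep.indepFun hij).comp (hgm y) (hgm y)
    have hident : ∀ i, IdentDistrib (X i) (X 0) ℙ ℙ := by
      intro i
      have base : IdentDistrib (q i) (q 0) ℙ ℙ :=
        ⟨(hmeas i).aemeasurable, (hmeas 0).aemeasurable, by rw [hlaw i, hlaw 0]⟩
      exact base.comp (hgm y)
    have hE : (∫ ω, X 0 ω ∂ℙ) = f y := by
      have h1 : (∫ ω, X 0 ω ∂ℙ) = ∫ z, ‖y - z‖ ∂(Measure.map (q 0) ℙ) :=
        (integral_map (hmeas 0).aemeasurable (hgm y).aestronglyMeasurable).symm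
      rw [h1, hlaw 0]
    have := strong_law_ae_real X hint0 hpair hident
    rw [hE] at this
    exact this
  -- almost sure events: all samples in Q
  have hinQ : ∀ᵐ ω : Ω, ∀ j, q j ω ∈ Q := by
    rw [ae_all_iff]
    intro j
    rw [ae_iff]
    have : {ω | ¬ q j ω ∈ Q} = q j ⁻¹' Qᶜ := rfl
    rw [this, ← Measure.map_apply (hmeas j) hQ.isClosed.measurableSet.compl, hlaw j, hsupp]
  have hslln_s : ∀ᵐ ω : Ω, ∀ y ∈ s,
      Tendsto (fun n : ℕ => (∑ j ∈ Finset.range n, ‖y - q j ω‖) / n) atTop (nhds (f y)) :=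
    (ae_ball_iff hsc).2 fun y _ => slln y
  filter_upwards [hinQ, hslln_s] with ω hω1 hω2
  refine aux_det f hfl pbar hpbar hpbaruniq (fun j => q j ω) R hR
    (fun j => ?_) s hsd hω2 (fun n => pFT n ω) (fun n y => hFT n ω y)
  have := hQR (hω1 j)
  rwa [Metric.mem_closedBall, dist_zero_right] at this
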